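/- Let Φ_k(x,y,z) = x²y² − (x²+y²)z² + kz⁴ (Cassini quartic) and F₀(x,y,z) = (X,Y,Z) where X = −2xy(x²+y²−2kz²), Y = y⁴−x⁴, Z = 2xy(x²−y²). Then Φ_k(X,Y,Z) = 16k·x²y²(x²−y²)⁴·Φ_k(x,y,z). In particular the Cassini curve Φ_k = 0 is invariant under the induced rational map of ℙ². -/
import Mathlib


/-- The Cassini quartic `Φ_k(x,y,z) = x²y² − (x²+y²)z² + kz⁴` (Eq. (7.1)). -/
noncomputable def cassiniPhi (k x y z : ℂ) : ℂ :=
  x ^ 2 * y ^ 2 - (x ^ 2 + y ^ 2) * z ^ 2 + k * z ^ 4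

/-- The homogeneous map `F₀(x,y,z) = (X,Y,Z)` of Eq. (7.2) with parameter `a = 0`:
`X = −2xy(x²+y²−2kz²)`, `Y = y⁴−x⁴`, `Z = 2xy(x²−y²)`. -/
noncomputable def cassiniF0 (k x y z : ℂ) : ℂ × ℂ × ℂ :=
  (-2 * x * y * (x ^ 2 + y ^ 2 - 2 * k * z ^ 2),
   y ^ 4 - x ^ 4,
   2 * x * y * (x ^ 2 - y ^ 2))

/-- **Invariance of the Cassini quartic** (Eq. (7.4)).
One has the polynomial identity `Φ_k(X,Y,Z) = 16k·x²y²(x²−y²)⁴·Φ_k(x,y,z)`; in particular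
the Cassini curve `Φ_k = 0` is invariant under the induced rational map of `ℙ²`. -/
theorem cassini_invariance (k x y z : ℂ) :
    cassiniPhi k (cassiniF0 k x y z).1 (cassiniF0 k x y z).2.1 (cassiniF0 k x y z).2.2 =
      16 * k * x ^ 2 * y ^ 2 * (x ^ 2 - y ^ 2) ^ 4 * cassiniPhi k x y z ∧
    (cassiniPhi k x y z = 0 →
      cassiniPhi k (cassiniF0 k x y z).1 (cassiniF0 k x y z).2.1
        (cassiniF0 k x y z).2.2 = 0) := by
  have h1 : cassiniPhi k (cassiniF0 k x y z).1 (cassiniF0 k x y z).2.1 (cassiniF0 k x y z).2.2 =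
      16 * k * x ^ 2 * y ^ 2 * (x ^ 2 - y ^ 2) ^ 4 * cassiniPhi k x y z := by
    simp only [cassiniPhi, cassiniF0]
    ring
  exact ⟨h1, fun h => by rw [h1, h, mul_zero]⟩
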